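/- Fix ρ > 0 and let x, z, y, w : [0,∞) → ℝ be differentiable functions satisfying the regularized saddle-flow dynamics for the bilinear Lagrangian L(x,y) = xy: ẋ = −y − (x − z)/ρ, ż = (x − z)/ρ, ẏ = x − (y − w)/ρ, ẇ = (y − w)/ρ for all t ≥ 0. Then (x(t), z(t), y(t), w(t)) → (0, 0, 0, 0) as t → ∞, i.e. the trajectories asymptotically converge to the saddle point of L(x,y) = xy. -/

import Mathlib

open Filter

private lemma alg_decrease (r ε a b u v : ℝ) (hε : 0 < ε)
    (h1 : ε * (1 + 4*r^2) ≤ r/2) (h2 : ε ≤ 1/8) :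
    (a * (-u - (a - b)*r) + b * ((a - b)*r) + u * (a - (u - v)*r) + v * ((u - v)*r)
      + ε * ((a - (u - v)*r) * (a - b) + u * ((-u - (a - b)*r) - (a - b)*r)
           - ((-u - (a - b)*r) * (u - v) + a * ((a - (u - v)*r) - (u - v)*r))))
    + (ε/10) * ((a*a + b*b + u*u + v*v)/2 + ε * (u*(a-b) - a*(u-v))) ≤ 0 := by
  have hεr : ε ≤ r/2 := le_trans (by nlinarith [sq_nonneg r]) h1
  have hA : (a * (-u - (a - b)*r) + b * ((a - b)*r) + u * (a - (u - v)*r) + v * ((u - v)*r)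
      + ε * ((a - (u - v)*r) * (a - b) + u * ((-u - (a - b)*r) - (a - b)*r)
           - ((-u - (a - b)*r) * (u - v) + a * ((a - (u - v)*r) - (u - v)*r))))
      ≤ -(ε/4)*(a^2+u^2) - (r/2)*((a-b)^2+(u-v)^2) := by
    nlinarith [mul_nonneg hε.le (sq_nonneg (a/2 - (a-b))),
      mul_nonneg hε.le (sq_nonneg (u/2 - (u-v))),
      mul_nonneg hε.le (sq_nonneg (a/2 - 2*r*(u-v))),
      mul_nonneg hε.le (sq_nonneg (u/2 + 2*r*(a-b))),
      mul_nonneg (sub_nonneg.2 h1) (add_nonneg (sq_nonneg (a-b)) (sq_nonneg (u-v)))]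
  have hB : (ε/10) * ((a*a + b*b + u*u + v*v)/2 + ε * (u*(a-b) - a*(u-v)))
      ≤ (ε/4)*(a^2+u^2) + (r/2)*((a-b)^2+(u-v)^2) := by
    nlinarith [mul_nonneg hε.le (sq_nonneg (2*a - b)),
      mul_nonneg hε.le (sq_nonneg (2*u - v)),
      mul_nonneg (mul_nonneg hε.le hε.le) (sq_nonneg (u - (a-b))),
      mul_nonneg (mul_nonneg hε.le hε.le) (sq_nonneg (a + (u-v))),
      mul_nonneg (mul_nonneg hε.le (sub_nonneg.2 h2)) (sq_nonneg a),
      mul_nonneg (mul_nonneg hε.le (sub_nonneg.2 h2)) (sq_nonneg u),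
      mul_nonneg (mul_nonneg hε.le (sub_nonneg.2 h2)) (sq_nonneg (a-b)),
      mul_nonneg (mul_nonneg hε.le (sub_nonneg.2 h2)) (sq_nonneg (u-v)),
      mul_nonneg (sub_nonneg.2 hεr) (sq_nonneg (a-b)),
      mul_nonneg (sub_nonneg.2 hεr) (sq_nonneg (u-v))]
  linarith

private lemma alg_pd (ε a b u v : ℝ) (hε : 0 < ε) (h2 : ε ≤ 1/8) :
    (a^2 + b^2 + u^2 + v^2)/4 ≤ (a*a + b*b + u*u + v*v)/2 + ε * (u*(a-b) - a*(u-v)) := by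
  nlinarith [mul_nonneg hε.le (sq_nonneg (u + (a-b))),
    mul_nonneg hε.le (sq_nonneg (a - (u-v))),
    mul_nonneg (sub_nonneg.2 h2) (sq_nonneg a),
    mul_nonneg (sub_nonneg.2 h2) (sq_nonneg b),
    mul_nonneg (sub_nonneg.2 h2) (sq_nonneg u),
    mul_nonneg (sub_nonneg.2 h2) (sq_nonneg v),
    mul_nonneg hε.le (sq_nonneg (a+b)), mul_nonneg hε.le (sq_nonneg (u+v))]

/-- **Convergence of the regularized saddle-flow dynamics for `L(x,y) = xy`.**
For `ρ > 0`, trajectories of `ẋ = −y − (x−z)/ρ`, `ż = (x−z)/ρ`, `ẏ = x − (y−w)/ρ`,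
`ẇ = (y−w)/ρ` (for all `t ≥ 0`) asymptotically converge to `(0,0,0,0)`, the saddle
point of the bilinear Lagrangian `L(x,y) = xy`. -/
theorem regularized_saddle_flow_bilinear_convergence
    (ρ : ℝ) (hρ : 0 < ρ) (x z y w : ℝ → ℝ)
    (hx : ∀ t : ℝ, 0 ≤ t → HasDerivAt x (-(y t) - (x t - z t) / ρ) t)
    (hz : ∀ t : ℝ, 0 ≤ t → HasDerivAt z ((x t - z t) / ρ) t)
    (hy : ∀ t : ℝ, 0 ≤ t → HasDerivAt y (x t - (y t - w t) / ρ) t)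
    (hw : ∀ t : ℝ, 0 ≤ t → HasDerivAt w ((y t - w t) / ρ) t) :
    Tendsto (fun t => (x t, z t, y t, w t)) atTop
      (nhds ((0 : ℝ), (0 : ℝ), (0 : ℝ), (0 : ℝ))) := by
  have hρ' : ρ ≠ 0 := hρ.ne'
  set ε : ℝ := ρ / (2*(ρ^2+4)) with hεdef
  have hε : 0 < ε := div_pos hρ (by positivity)
  have h1 : ε * (1 + 4*(ρ⁻¹)^2) ≤ ρ⁻¹/2 := by
    have : ε * (1 + 4*(ρ⁻¹)^2) = ρ⁻¹/2 := by
      rw [hεdef]; field_simp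
    exact le_of_eq this
  have h2 : ε ≤ 1/8 := by
    rw [hεdef, div_le_div_iff₀ (by positivity) (by norm_num)]
    nlinarith [sq_nonneg (ρ-2)]
  set c : ℝ := ε/10 with hcdef
  have hc : 0 < c := by positivity
  set W : ℝ → ℝ := fun t => (x t * x t + z t * z t + y t * y t + w t * w t)/2
      + ε * (y t * (x t - z t) - x t * (y t - w t)) with hWdef
  set g : ℝ → ℝ := fun t => W t * Real.exp (c * t) with hgdef
  -- derivative of g
  have hg : ∀ t : ℝ, 0 ≤ t → HasDerivAt g
      (((x t * (-(y t) - (x t - z t)*ρ⁻¹) + z t * ((x t - z t)*ρ⁻¹)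
        + y t * (x t - (y t - w t)*ρ⁻¹) + w t * ((y t - w t)*ρ⁻¹)
        + ε * ((x t - (y t - w t)*ρ⁻¹) * (x t - z t)
             + y t * ((-(y t) - (x t - z t)*ρ⁻¹) - (x t - z t)*ρ⁻¹)
             - ((-(y t) - (x t - z t)*ρ⁻¹) * (y t - w t)
             + x t * ((x t - (y t - w t)*ρ⁻¹) - (y t - w t)*ρ⁻¹))))
        + c * W t) * Real.exp (c * t)) t := by
    intro t ht
    have Hx := hx t ht
    have Hz := hz t ht
    have Hy := hy t ht
    have Hw := hw t ht
    have hWd : HasDerivAt W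
        (x t * (-(y t) - (x t - z t)*ρ⁻¹) + z t * ((x t - z t)*ρ⁻¹)
        + y t * (x t - (y t - w t)*ρ⁻¹) + w t * ((y t - w t)*ρ⁻¹)
        + ε * ((x t - (y t - w t)*ρ⁻¹) * (x t - z t)
             + y t * ((-(y t) - (x t - z t)*ρ⁻¹) - (x t - z t)*ρ⁻¹)
             - ((-(y t) - (x t - z t)*ρ⁻¹) * (y t - w t)
             + x t * ((x t - (y t - w t)*ρ⁻¹) - (y t - w t)*ρ⁻¹)))) t := by
      have hd := ((((Hx.mul Hx).add (Hz.mul Hz)).add (Hy.mul Hy)).add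
          (Hw.mul Hw)).div_const 2 |>.add
        (((Hy.mul (Hx.sub Hz)).sub (Hx.mul (Hy.sub Hw))).const_mul ε)
      rw [hWdef]
      exact hd.congr_deriv (by simp only [Pi.sub_apply]; ring)
    have hexp : HasDerivAt (fun s : ℝ => Real.exp (c * s)) (Real.exp (c * t) * c) t := by
      have := ((hasDerivAt_id t).const_mul c).exp
      simpa using this
    have := hWd.mul hexp
    rw [hgdef]
    exact this.congr_deriv (by ring)
  -- g is antitone on [0, ∞)
  have hmono : AntitoneOn g (Set.Ici (0:ℝ)) := by
    apply antitoneOn_of_deriv_nonpos (convex_Ici 0)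
    · exact fun t ht => (hg t ht).continuousAt.continuousWithinAt
    · intro t ht
      rw [interior_Ici] at ht
      exact (hg t ht.le).differentiableAt.differentiableWithinAt
    · intro t ht
      rw [interior_Ici] at ht
      rw [(hg t ht.le).deriv]
      have halg := alg_decrease ρ⁻¹ ε (x t) (z t) (y t) (w t) hε h1 h2
      have hkey : (x t * (-(y t) - (x t - z t)*ρ⁻¹) + z t * ((x t - z t)*ρ⁻¹)
        + y t * (x t - (y t - w t)*ρ⁻¹) + w t * ((y t - w t)*ρ⁻¹)
        + ε * ((x t - (y t - w t)*ρ⁻¹) * (x t - z t)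
             + y t * ((-(y t) - (x t - z t)*ρ⁻¹) - (x t - z t)*ρ⁻¹)
             - ((-(y t) - (x t - z t)*ρ⁻¹) * (y t - w t)
             + x t * ((x t - (y t - w t)*ρ⁻¹) - (y t - w t)*ρ⁻¹))))
        + c * W t ≤ 0 := by
        have heq : (x t * (-(y t) - (x t - z t)*ρ⁻¹) + z t * ((x t - z t)*ρ⁻¹)
          + y t * (x t - (y t - w t)*ρ⁻¹) + w t * ((y t - w t)*ρ⁻¹)
          + ε * ((x t - (y t - w t)*ρ⁻¹) * (x t - z t)
               + y t * ((-(y t) - (x t - z t)*ρ⁻¹) - (x t - z t)*ρ⁻¹)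
               - ((-(y t) - (x t - z t)*ρ⁻¹) * (y t - w t)
               + x t * ((x t - (y t - w t)*ρ⁻¹) - (y t - w t)*ρ⁻¹))))
          + c * W t
          = (x t * (-(y t) - (x t - z t)*ρ⁻¹) + z t * ((x t - z t)*ρ⁻¹)
          + y t * (x t - (y t - w t)*ρ⁻¹) + w t * ((y t - w t)*ρ⁻¹)
          + ε * ((x t - (y t - w t)*ρ⁻¹) * (x t - z t)
               + y t * ((-(y t) - (x t - z t)*ρ⁻¹) - (x t - z t)*ρ⁻¹)
               - ((-(y t) - (x t - z t)*ρ⁻¹) * (y t - w t)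
               + x t * ((x t - (y t - w t)*ρ⁻¹) - (y t - w t)*ρ⁻¹))))
          + (ε/10) * ((x t * x t + z t * z t + y t * y t + w t * w t)/2
            + ε * (y t * (x t - z t) - x t * (y t - w t))) := by
          rw [hcdef, hWdef]
        rw [heq]; exact halg
      exact mul_nonpos_of_nonpos_of_nonneg hkey (Real.exp_pos _).le
  -- decay bound on W
  have hWbound : ∀ t : ℝ, 0 ≤ t → W t ≤ W 0 / Real.exp (c * t) := by
    intro t ht
    have h := hmono Set.self_mem_Ici ht ht
    have hg0 : g 0 = W 0 := by rw [hgdef]; simp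
    rw [le_div_iff₀ (Real.exp_pos _)]
    calc W t * Real.exp (c * t) = g t := by rw [hgdef]
      _ ≤ g 0 := h
      _ = W 0 := hg0
  -- bound on the sum of squares
  have hQb : ∀ t : ℝ, 0 ≤ t →
      x t^2 + z t^2 + y t^2 + w t^2 ≤ 4 * (W 0 / Real.exp (c * t)) := by
    intro t ht
    have hpd := alg_pd ε (x t) (z t) (y t) (w t) hε h2
    have hpd' : (x t^2 + z t^2 + y t^2 + w t^2)/4 ≤ W t := by
      rw [hWdef]; exact hpd
    have := hWbound t ht
    linarith
  -- the sum of squares tends to 0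
  have hub : Tendsto (fun t : ℝ => 4 * (W 0 / Real.exp (c * t))) atTop (nhds 0) := by
    have h1' : Tendsto (fun t : ℝ => c * t) atTop atTop :=
      Tendsto.const_mul_atTop hc tendsto_id
    have h2' : Tendsto (fun t : ℝ => Real.exp (c * t)) atTop atTop :=
      Real.tendsto_exp_atTop.comp h1'
    have h3' : Tendsto (fun t : ℝ => W 0 / Real.exp (c * t)) atTop (nhds 0) :=
      Tendsto.div_atTop tendsto_const_nhds h2'
    simpa using h3'.const_mul 4
  have hQ0 : Tendsto (fun t => x t^2 + z t^2 + y t^2 + w t^2) atTop (nhds 0) := by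
    apply tendsto_of_tendsto_of_tendsto_of_le_of_le' tendsto_const_nhds hub
    · filter_upwards with t
      positivity
    · filter_upwards [eventually_ge_atTop (0:ℝ)] with t ht
      exact hQb t ht
  -- each coordinate tends to 0
  have hsq : ∀ f : ℝ → ℝ, (∀ t : ℝ, f t^2 ≤ x t^2 + z t^2 + y t^2 + w t^2) →
      Tendsto f atTop (nhds 0) := by
    intro f hf
    have hf2 : Tendsto (fun t => f t^2) atTop (nhds 0) := by
      apply tendsto_of_tendsto_of_tendsto_of_le_of_le' tendsto_const_nhds hQ0
      · filter_upwards with t; exact sq_nonneg _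
      · filter_upwards with t; exact hf t
    have habs : Tendsto (fun t => |f t|) atTop (nhds 0) := by
      have := (Real.continuous_sqrt.tendsto 0).comp hf2
      simpa only [Function.comp_def, Real.sqrt_sq_eq_abs, Real.sqrt_zero] using this
    exact tendsto_of_tendsto_of_tendsto_of_le_of_le' (neg_zero (G := ℝ) ▸ habs.neg) habs
      (by filter_upwards with t; exact neg_abs_le _)
      (by filter_upwards with t; exact le_abs_self _)
  have hx0 : Tendsto x atTop (nhds 0) := hsq x fun t => by nlinarith [sq_nonneg (z t), sq_nonneg (y t), sq_nonneg (w t)]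
  have hz0 : Tendsto z atTop (nhds 0) := hsq z fun t => by nlinarith [sq_nonneg (x t), sq_nonneg (y t), sq_nonneg (w t)]
  have hy0 : Tendsto y atTop (nhds 0) := hsq y fun t => by nlinarith [sq_nonneg (x t), sq_nonneg (z t), sq_nonneg (w t)]
  have hw0 : Tendsto w atTop (nhds 0) := hsq w fun t => by nlinarith [sq_nonneg (x t), sq_nonneg (z t), sq_nonneg (y t)]
  exact hx0.prodMk_nhds (hz0.prodMk_nhds (hy0.prodMk_nhds hw0))
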